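/- Let M be a Puiseux monoid with an approximation (M_i)_{i≥1}, and let x be a nonzero element of M with x ∈ M_j. Then the sequence (ρ_{M_{i+j}}(x))_{i≥1} is nondecreasing and converges (in ℝ ∪ {∞}) to ρ_M(x). -/

import Mathlib

open scoped NNRat ENNReal

/-- The set of atoms of a Puiseux monoid (additive submonoid of `ℚ≥0`). -/
def PMatoms (M : AddSubmonoid ℚ≥0) : Set ℚ≥0 :=
  {a | a ∈ M ∧ a ≠ 0 ∧ ∀ y ∈ M, ∀ z ∈ M, y ≠ 0 → z ≠ 0 → a ≠ y + z}

/-- A Puiseux monoid is atomic if it is generated by its atoms. -/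
def PMatomic (M : AddSubmonoid ℚ≥0) : Prop :=
  ∀ x ∈ M, x ∈ AddSubmonoid.closure (PMatoms M)

/-- The set of factorizations of `x` in `M`: multisets of atoms summing to `x`. -/
def PMfactorizations (M : AddSubmonoid ℚ≥0) (x : ℚ≥0) : Set (Multiset ℚ≥0) :=
  {s | (∀ a ∈ s, a ∈ PMatoms M) ∧ s.sum = x}

/-- The set of lengths of `x` in `M`. -/
def PMlengths (M : AddSubmonoid ℚ≥0) (x : ℚ≥0) : Set ℕ :=
  Multiset.card '' PMfactorizations M x

/-- The elasticity of an element: `sup L(x) / inf L(x)` in `ℝ≥0∞`, `1` for `x = 0`. -/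
noncomputable def PMelasticityOf (M : AddSubmonoid ℚ≥0) (x : ℚ≥0) : ℝ≥0∞ :=
  if x = 0 then 1
  else sSup ((fun n : ℕ => (n : ℝ≥0∞)) '' PMlengths M x) /
       sInf ((fun n : ℕ => (n : ℝ≥0∞)) '' PMlengths M x)

/-- The elasticity of a Puiseux monoid. -/
noncomputable def PMelasticity (M : AddSubmonoid ℚ≥0) : ℝ≥0∞ :=
  ⨆ x ∈ M, PMelasticityOf M x

/-- The union of sets of lengths containing `n`. -/
def PMunionOfLengths (M : AddSubmonoid ℚ≥0) (n : ℕ) : Set ℕ :=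
  {m | ∃ x : ℚ≥0, n ∈ PMlengths M x ∧ m ∈ PMlengths M x}

/-- The `n`-th local elasticity `ρ_n(M) = sup U_n(M)` in `ℝ≥0∞`. -/
noncomputable def PMlocalElasticity (M : AddSubmonoid ℚ≥0) (n : ℕ) : ℝ≥0∞ :=
  sSup ((fun m : ℕ => (m : ℝ≥0∞)) '' PMunionOfLengths M n)

/-- The set of distances of an element `x` of `M`. -/
def PMdistances (M : AddSubmonoid ℚ≥0) (x : ℚ≥0) : Set ℕ :=
  {d | 0 < d ∧ ∃ l ∈ PMlengths M x,
    PMlengths M x ∩ Set.Icc l (l + d) = {l, l + d}}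

/-- The set of distances (delta set) of `M`. -/
def PMDelta (M : AddSubmonoid ℚ≥0) : Set ℕ :=
  ⋃ x ∈ {y : ℚ≥0 | y ∈ M ∧ y ≠ 0}, PMdistances M x

/-- `(Mi)` is an approximation of `M`: an increasing sequence of atomic submonoids
with union `M` and increasing sets of atoms. -/
def PMapprox (M : AddSubmonoid ℚ≥0) (Mi : ℕ → AddSubmonoid ℚ≥0) : Prop :=
  (∀ i, Mi i ≤ Mi (i + 1)) ∧ (∀ i, PMatomic (Mi i)) ∧
  (∀ i, PMatoms (Mi i) ⊆ PMatoms (Mi (i + 1))) ∧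
  (∀ x, x ∈ M ↔ ∃ i, x ∈ Mi i)


section Aux

variable {M : AddSubmonoid ℚ≥0} {Mi : ℕ → AddSubmonoid ℚ≥0}

lemma PM_chain_mono (h1 : ∀ i, Mi i ≤ Mi (i + 1)) : Monotone Mi :=
  monotone_nat_of_le_succ h1

lemma PM_atoms_mono (h3 : ∀ i, PMatoms (Mi i) ⊆ PMatoms (Mi (i + 1))) :
    ∀ {i k}, i ≤ k → PMatoms (Mi i) ⊆ PMatoms (Mi k) := by
  intro i k hik
  induction k, hik using Nat.le_induction with
  | base => exact subset_rfl
  | succ k hk ih => exact ih.trans (h3 k)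

lemma PM_fact_mono {N1 N2 : AddSubmonoid ℚ≥0} (hat : PMatoms N1 ⊆ PMatoms N2) (x : ℚ≥0) :
    PMfactorizations N1 x ⊆ PMfactorizations N2 x := by
  rintro s ⟨h1, h2⟩
  exact ⟨fun a ha => hat (h1 a ha), h2⟩

lemma PM_lengths_mono {N1 N2 : AddSubmonoid ℚ≥0} (hat : PMatoms N1 ⊆ PMatoms N2) (x : ℚ≥0) :
    PMlengths N1 x ⊆ PMlengths N2 x :=
  Set.image_mono (PM_fact_mono hat x)

lemma PM_atoms_sub_M (h : PMapprox M Mi) (i : ℕ) : PMatoms (Mi i) ⊆ PMatoms M := by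
  rintro a ⟨haM, ha0, hsum⟩
  refine ⟨(h.2.2.2 a).2 ⟨i, haM⟩, ha0, ?_⟩
  rintro y hy z hz hy0 hz0 rfl
  obtain ⟨k1, hk1⟩ := (h.2.2.2 y).1 hy
  obtain ⟨k2, hk2⟩ := (h.2.2.2 z).1 hz
  set k := max i (max k1 k2) with hk
  have ha' : y + z ∈ PMatoms (Mi k) :=
    PM_atoms_mono h.2.2.1 (le_max_left _ _) ⟨haM, ha0, hsum⟩
  exact ha'.2.2 y (PM_chain_mono h.1 ((le_max_left k1 k2).trans (le_max_right i _)) hk1)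
    z (PM_chain_mono h.1 ((le_max_right k1 k2).trans (le_max_right i _)) hk2) hy0 hz0 rfl

lemma PM_atom_of_M (h : PMapprox M Mi) {a : ℚ≥0} (ha : a ∈ PMatoms M) :
    ∃ i, a ∈ PMatoms (Mi i) := by
  obtain ⟨i, hi⟩ := (h.2.2.2 a).1 ha.1
  refine ⟨i, hi, ha.2.1, fun y hy z hz hy0 hz0 => ?_⟩
  exact ha.2.2 y ((h.2.2.2 y).2 ⟨i, hy⟩) z ((h.2.2.2 z).2 ⟨i, hz⟩) hy0 hz0

lemma PM_fact_eq (h : PMapprox M Mi) (j : ℕ) (x : ℚ≥0) :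
    PMfactorizations M x = ⋃ i, PMfactorizations (Mi (i + j)) x := by
  apply Set.Subset.antisymm
  · rintro s ⟨h1, h2⟩
    have : ∃ i, ∀ a ∈ s, a ∈ PMatoms (Mi i) := by
      clear h2
      induction s using Multiset.induction with
      | empty => exact ⟨0, by simp⟩
      | cons a s ih =>
        obtain ⟨i1, hi1⟩ := ih (fun b hb => h1 b (Multiset.mem_cons_of_mem hb))
        obtain ⟨i2, hi2⟩ := PM_atom_of_M h (h1 a (Multiset.mem_cons_self a s))
        refine ⟨max i1 i2, fun b hb => ?_⟩
        rcases Multiset.mem_cons.1 hb with rfl | hb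
        · exact PM_atoms_mono h.2.2.1 (le_max_right _ _) hi2
        · exact PM_atoms_mono h.2.2.1 (le_max_left _ _) (hi1 b hb)
    obtain ⟨i, hi⟩ := this
    exact Set.mem_iUnion.2 ⟨i, fun a ha =>
      PM_atoms_mono h.2.2.1 (Nat.le_add_right i j) (hi a ha), h2⟩
  · exact Set.iUnion_subset fun i => PM_fact_mono (PM_atoms_sub_M h _) x

lemma PM_lengths_eq (h : PMapprox M Mi) (j : ℕ) (x : ℚ≥0) :
    PMlengths M x = ⋃ i, PMlengths (Mi (i + j)) x := by
  unfold PMlengths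
  rw [PM_fact_eq h j x, Set.image_iUnion]

lemma PM_lengths_nonempty {N : AddSubmonoid ℚ≥0} (hN : PMatomic N) {x : ℚ≥0} (hx : x ∈ N) :
    (PMlengths N x).Nonempty := by
  obtain ⟨s, hs1, hs2⟩ := AddSubmonoid.exists_multiset_of_mem_closure (hN x hx)
  exact ⟨Multiset.card s, s, ⟨hs1, hs2⟩, rfl⟩

lemma PM_one_le_length {N : AddSubmonoid ℚ≥0} {x : ℚ≥0} (hx0 : x ≠ 0) {n : ℕ}
    (hn : n ∈ PMlengths N x) : 1 ≤ n := by
  obtain ⟨s, ⟨-, hsum⟩, rfl⟩ := hn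
  by_cases hs : s = 0
  · subst hs; simp at hsum; exact absurd hsum.symm hx0
  · have := Multiset.card_pos_iff_exists_mem.2 (Multiset.exists_mem_of_ne_zero hs)
    omega

lemma PM_sInf_image_cast {L : Set ℕ} (hL : L.Nonempty) :
    sInf ((fun n : ℕ => (n : ℝ≥0∞)) '' L) = ((sInf L : ℕ) : ℝ≥0∞) := by
  apply le_antisymm
  · exact sInf_le ⟨_, Nat.sInf_mem hL, rfl⟩
  · refine le_sInf ?_
    rintro _ ⟨n, hn, rfl⟩
    simp only []
    exact_mod_cast Nat.sInf_le hn

end Aux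

theorem stmt3 (M : AddSubmonoid ℚ≥0) (Mi : ℕ → AddSubmonoid ℚ≥0)
    (h : PMapprox M Mi) (x : ℚ≥0) (hx : x ∈ M) (hx0 : x ≠ 0)
    (j : ℕ) (hj : x ∈ Mi j) :
    Monotone (fun i : ℕ => PMelasticityOf (Mi (i + j)) x) ∧
    Filter.Tendsto (fun i : ℕ => PMelasticityOf (Mi (i + j)) x) Filter.atTop
      (nhds (PMelasticityOf M x)) := by
  obtain ⟨h1, h2, h3, h4⟩ := h
  have hMi : ∀ i : ℕ, x ∈ Mi (i + j) :=
    fun i => PM_chain_mono h1 (Nat.le_add_left j i) hj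
  set L : ℕ → Set ℕ := fun i => PMlengths (Mi (i + j)) x with hL
  have hLne : ∀ i, (L i).Nonempty := fun i => PM_lengths_nonempty (h2 (i + j)) (hMi i)
  have hLmono : Monotone L := by
    intro i k hik
    exact PM_lengths_mono (PM_atoms_mono h3 (by omega)) x
  set A : ℕ → ℝ≥0∞ := fun i => sSup ((fun n : ℕ => (n : ℝ≥0∞)) '' L i) with hA
  set B : ℕ → ℝ≥0∞ := fun i => sInf ((fun n : ℕ => (n : ℝ≥0∞)) '' L i) with hB
  have hfi : ∀ i, PMelasticityOf (Mi (i + j)) x = A i / B i := by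
    intro i; simp [PMelasticityOf, hx0, hA, hB, hL, PMlengths]
  have hAmono : Monotone A := fun i k hik => sSup_le_sSup (Set.image_mono (hLmono hik))
  have hBanti : Antitone B := fun i k hik => sInf_le_sInf (Set.image_mono (hLmono hik))
  have hmono : Monotone (fun i : ℕ => PMelasticityOf (Mi (i + j)) x) := by
    intro i k hik
    simp only [hfi]
    exact ENNReal.div_le_div (hAmono hik) (hBanti hik)
  refine ⟨hmono, ?_⟩
  -- the limit
  have happrox : PMapprox M Mi := ⟨h1, h2, h3, h4⟩
  have hLM : PMlengths M x = ⋃ i, L i := PM_lengths_eq happrox j x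
  -- inf part: stabilization
  set n : ℕ → ℕ := fun i => sInf (L i) with hn
  have hnanti : Antitone n := by
    intro i k hik
    exact Nat.sInf_le (hLmono hik (Nat.sInf_mem (hLne i)))
  set c : ℕ := sInf (Set.range n) with hc
  obtain ⟨N, hN⟩ : ∃ N, n N = c := Set.mem_range.1 (Nat.sInf_mem (Set.range_nonempty n))
  have hstab : ∀ i, N ≤ i → n i = c := by
    intro i hi
    have h1' : n i ≤ c := hN ▸ hnanti hi
    have h2' : c ≤ n i := Nat.sInf_le ⟨i, rfl⟩
    omega
  have hBi : ∀ i, B i = (n i : ℝ≥0∞) := fun i => PM_sInf_image_cast (hLne i)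
  have hc1 : 1 ≤ c := by
    have h' := PM_one_le_length hx0 (Nat.sInf_mem (hLne N))
    exact hN ▸ h' 
  have hc0 : (c : ℝ≥0∞) ≠ 0 := by exact_mod_cast Nat.one_le_iff_ne_zero.1 hc1
  -- target value
  have hAinf : sSup ((fun n : ℕ => (n : ℝ≥0∞)) '' PMlengths M x) = ⨆ i, A i := by
    rw [hLM, Set.image_iUnion, sSup_iUnion]
  have hBinf : sInf ((fun n : ℕ => (n : ℝ≥0∞)) '' PMlengths M x) = (c : ℝ≥0∞) := by
    have hne : (PMlengths M x).Nonempty := (hLM ▸ (hLne N).mono (Set.subset_iUnion L N))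
    rw [PM_sInf_image_cast hne]
    congr 1
    have hle : sInf (PMlengths M x) ≤ c := by
      rw [← hN]; exact Nat.sInf_le (hLM ▸ Set.mem_iUnion.2 ⟨N, Nat.sInf_mem (hLne N)⟩)
    have hge : c ≤ sInf (PMlengths M x) := by
      have hmem : sInf (PMlengths M x) ∈ ⋃ i, L i := hLM ▸ Nat.sInf_mem hne
      obtain ⟨i, hi⟩ := Set.mem_iUnion.1 hmem
      calc c ≤ n i := Nat.sInf_le ⟨i, rfl⟩
        _ ≤ sInf (PMlengths M x) := Nat.sInf_le hi
    exact le_antisymm hle hge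
  have hEM : PMelasticityOf M x = (⨆ i, A i) / (c : ℝ≥0∞) := by
    rw [PMelasticityOf, if_neg hx0, hAinf, hBinf]
  rw [hEM]
  have htendA : Filter.Tendsto A Filter.atTop (nhds (⨆ i, A i)) := tendsto_atTop_iSup hAmono
  have htend : Filter.Tendsto (fun i => A i * (c : ℝ≥0∞)⁻¹) Filter.atTop
      (nhds ((⨆ i, A i) * (c : ℝ≥0∞)⁻¹)) :=
    ENNReal.Tendsto.mul_const htendA (Or.inr (by simp [ENNReal.inv_ne_top, hc0]))
  rw [div_eq_mul_inv]
  refine htend.congr' ?_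
  filter_upwards [Filter.eventually_ge_atTop N] with i hi
  rw [hfi i, hBi i, hstab i hi, div_eq_mul_inv]
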